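/- Let G be a tightly connected disperse ℓ-uniform hypergraph (ℓ ≥ 3). Then for every vertex v, the link L(v) is tightly connected. -/

import Mathlib

open Finset

/-- An `ℓ`-uniform hypergraph (given by its edge set `E`) is disperse if every
`(ℓ+1)`-set of vertices induces `0`, `1`, `ℓ` or `ℓ+1` edges. -/
def Disperse {V : Type*} [DecidableEq V] (ℓ : ℕ) (E : Finset (Finset V)) : Prop :=
  ∀ X : Finset V, X.card = ℓ + 1 →
    (E.filter (· ⊆ X)).card = 0 ∨ (E.filter (· ⊆ X)).card = 1 ∨
    (E.filter (· ⊆ X)).card = ℓ ∨ (E.filter (· ⊆ X)).card = ℓ + 1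

/-- Edge set of the link of a vertex `v`: all `(ℓ-1)`-sets `e` with `e ∪ {v} ∈ E`. -/
def linkEdges {V : Type*} [DecidableEq V] (E : Finset (Finset V)) (v : V) :
    Finset (Finset V) :=
  (E.filter (fun e => v ∈ e)).image (fun e => e.erase v)

/-- `A` and `B` are connected by a tight walk in the `k`-uniform hypergraph with
edge set `E`: there is a sequence of edges, consecutive ones sharing at least
`k - 1` vertices, whose first edge contains `A` and last edge contains `B`. -/
def TightConn {V : Type*} [DecidableEq V] (k : ℕ) (E : Finset (Finset V))
    (A B : Finset V) : Prop :=
  ∃ es : List (Finset V), ∃ h : es ≠ [],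
    (∀ e ∈ es, e ∈ E) ∧ es.Chain' (fun a b => k - 1 ≤ (a ∩ b).card) ∧
    A ⊆ es.head h ∧ B ⊆ es.getLast h

namespace LinksAux

variable {V : Type*} [DecidableEq V]

def Adj (ℓ : ℕ) (E : Finset (Finset V)) (v : V) (g g' : Finset V) : Prop :=
  g ∈ E ∧ g' ∈ E ∧ v ∈ g ∧ v ∈ g' ∧ ℓ - 2 ≤ ((g.erase v) ∩ (g'.erase v)).card

def Conn (ℓ : ℕ) (E : Finset (Finset V)) (v : V) : Finset V → Finset V → Prop :=
  Relation.ReflTransGen (Adj ℓ E v)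

lemma adj_symm {ℓ : ℕ} {E : Finset (Finset V)} {v : V} {g g' : Finset V}
    (h : Adj ℓ E v g g') : Adj ℓ E v g' g := by
  obtain ⟨h1, h2, h3, h4, h5⟩ := h
  exact ⟨h2, h1, h4, h3, by rwa [inter_comm]⟩

lemma conn_symm {ℓ : ℕ} {E : Finset (Finset V)} {v : V} {g g' : Finset V}
    (h : Conn ℓ E v g g') : Conn ℓ E v g' g :=
  by
    induction h with
    | refl => exact Relation.ReflTransGen.refl
    | tail _ hbc ih => exact Relation.ReflTransGen.head (adj_symm hbc) ih

lemma adj_of_inter {ℓ : ℕ} {E : Finset (Finset V)} {v : V} {g g' : Finset V}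
    (hg : g ∈ E) (hg' : g' ∈ E) (hvg : v ∈ g) (hvg' : v ∈ g')
    (hcard : ℓ - 1 ≤ (g ∩ g').card) : Adj ℓ E v g g' := by
  refine ⟨hg, hg', hvg, hvg', ?_⟩
  have he : (g.erase v) ∩ (g'.erase v) = (g ∩ g').erase v := by
    ext x; simp only [mem_inter, mem_erase]; tauto
  rw [he, card_erase_of_mem (mem_inter.mpr ⟨hvg, hvg'⟩)]
  omega

/-- the key disperse counting lemma: an `(ℓ+1)`-set containing two distinct
edges cannot have two missing `ℓ`-subsets. -/
lemma two_missing {ℓ : ℕ} {E : Finset (Finset V)} (hℓ : 3 ≤ ℓ)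
    (hunif : ∀ e ∈ E, e.card = ℓ) (hdisp : Disperse ℓ E)
    {X : Finset V} (hX : X.card = ℓ + 1) {e f : Finset V}
    (he : e ∈ E) (hf : f ∈ E) (hef : e ≠ f) (heX : e ⊆ X) (hfX : f ⊆ X)
    {p q : V} (hp : p ∈ X) (hq : q ∈ X) (hpq : p ≠ q)
    (hpE : X.erase p ∉ E) (hqE : X.erase q ∉ E) : False := by
  set F := E.filter (· ⊆ X) with hF
  have h2 : 2 ≤ F.card := by
    have : ({e, f} : Finset (Finset V)) ⊆ F := by
      intro x hx
      simp only [mem_insert, mem_singleton] at hx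
      rcases hx with rfl | rfl <;> simp [hF, mem_filter, he, hf, heX, hfX]
    calc 2 = ({e, f} : Finset (Finset V)).card := (card_pair hef).symm
    _ ≤ F.card := card_le_card this
  have hge : ℓ ≤ F.card := by
    rcases hdisp X hX with h | h | h | h <;> rw [← hF] at h <;> omega
  -- bijection between S and F
  set S := X.filter (fun x => X.erase x ∈ E) with hS
  have hcardeq : S.card = F.card := by
    apply card_bij (fun x _ => X.erase x)
    · intro x hx
      simp only [hS, mem_filter] at hx
      simp only [hF, mem_filter]
      exact ⟨hx.2, erase_subset _ _⟩
    · intro x hx y hy hxy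
      simp only [hS, mem_filter] at hx hy
      by_contra hne
      have : x ∈ X.erase y := mem_erase.mpr ⟨hne, hx.1⟩
      rw [← hxy] at this
      exact (notMem_erase x X) this
    · intro g hg
      simp only [hF, mem_filter] at hg
      have hgcard : g.card = ℓ := hunif g hg.1
      have hsd : (X \ g).card = 1 := by
        rw [card_sdiff_of_subset hg.2]; omega
      obtain ⟨x, hx⟩ := card_eq_one.mp hsd
      have hxX : x ∈ X := by
        have : x ∈ X \ g := hx ▸ mem_singleton_self x
        exact (mem_sdiff.mp this).1
      have hxg : x ∉ g := by
        have : x ∈ X \ g := hx ▸ mem_singleton_self x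
        exact (mem_sdiff.mp this).2
      have hsub : X.erase x ⊆ g := by
        intro y hy
        rw [mem_erase] at hy
        by_contra hyg
        have : y ∈ X \ g := mem_sdiff.mpr ⟨hy.2, hyg⟩
        rw [hx, mem_singleton] at this
        exact hy.1 this
      have hEq : X.erase x = g := by
        apply eq_of_subset_of_card_le hsub
        rw [card_erase_of_mem hxX]; omega
      refine ⟨x, ?_, hEq⟩
      simp only [hS, mem_filter]
      exact ⟨hxX, hEq ▸ hg.1⟩
  have hSsub : S ⊆ (X.erase p).erase q := by
    intro x hx
    simp only [hS, mem_filter] at hx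
    rw [mem_erase, mem_erase]
    refine ⟨?_, ?_, hx.1⟩
    · rintro rfl; exact hqE hx.2
    · rintro rfl; exact hpE hx.2
  have : S.card ≤ ℓ - 1 := by
    calc S.card ≤ ((X.erase p).erase q).card := card_le_card hSsub
    _ = ℓ - 1 := by
        rw [card_erase_of_mem (mem_erase.mpr ⟨hpq.symm, hq⟩), card_erase_of_mem hp]
        omega
  omega

lemma disperse_pair {ℓ : ℕ} {E : Finset (Finset V)} (hℓ : 3 ≤ ℓ)
    (hunif : ∀ e ∈ E, e.card = ℓ) (hdisp : Disperse ℓ E)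
    {X : Finset V} (hX : X.card = ℓ + 1) {e f : Finset V}
    (he : e ∈ E) (hf : f ∈ E) (hef : e ≠ f) (heX : e ⊆ X) (hfX : f ⊆ X)
    {p q : V} (hp : p ∈ X) (hq : q ∈ X) (hpq : p ≠ q)
    (hpE : X.erase p ∉ E) : X.erase q ∈ E := by
  by_contra hqE
  exact two_missing hℓ hunif hdisp hX he hf hef heX hfX hp hq hpq hpE hqE

/-- a `v`-edge `ℓ-1`-anchored at an edge not containing `v` sits inside it -/
lemma typeI {ℓ : ℕ} {E : Finset (Finset V)} {v : V} {g e : Finset V}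
    (hunif : ∀ e ∈ E, e.card = ℓ) (hg : g ∈ E) (hvg : v ∈ g) (hve : v ∉ e)
    (hge : ℓ - 1 ≤ (g ∩ e).card) : g ∩ e = g.erase v := by
  have hsub : g ∩ e ⊆ g.erase v := by
    intro x hx
    rw [mem_inter] at hx
    rw [mem_erase]
    exact ⟨fun hxv => hve (hxv ▸ hx.2), hx.1⟩
  apply eq_of_subset_of_card_le hsub
  rw [card_erase_of_mem hvg, hunif g hg]
  omega

lemma anchored_conn {ℓ : ℕ} {E : Finset (Finset V)} {v : V} (hℓ : 3 ≤ ℓ)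
    (hunif : ∀ e ∈ E, e.card = ℓ)
    {e g g' : Finset V} (he : e ∈ E) (hg : g ∈ E) (hg' : g' ∈ E)
    (hvg : v ∈ g) (hvg' : v ∈ g')
    (h1 : ℓ - 1 ≤ (g ∩ e).card) (h2 : ℓ - 1 ≤ (g' ∩ e).card) :
    Conn ℓ E v g g' := by
  by_cases hve : v ∈ e
  · have a1 : Adj ℓ E v g e := adj_of_inter hg he hvg hve h1
    have a2 : Adj ℓ E v e g' := adj_of_inter he hg' hve hvg' (by rwa [inter_comm])
    exact (Relation.ReflTransGen.single a1).tail a2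
  · have t1 := typeI hunif hg hvg hve h1
    have t2 := typeI hunif hg' hvg' hve h2
    refine Relation.ReflTransGen.single ⟨hg, hg', hvg, hvg', ?_⟩
    have hsub1 : g.erase v ⊆ e := t1 ▸ inter_subset_right
    have hsub2 : g'.erase v ⊆ e := t2 ▸ inter_subset_right
    have hu : (g.erase v ∪ g'.erase v).card ≤ ℓ :=
      (hunif e he) ▸ card_le_card (union_subset hsub1 hsub2)
    have hie := card_inter_add_card_union (g.erase v) (g'.erase v)
    have c1 : (g.erase v).card = ℓ - 1 := by
      rw [card_erase_of_mem hvg, hunif g hg]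
    have c2 : (g'.erase v).card = ℓ - 1 := by
      rw [card_erase_of_mem hvg', hunif g' hg']
    omega


lemma conn_to_walk {ℓ : ℕ} {E : Finset (Finset V)} {v : V} {g g' : Finset V}
    (hg : g ∈ E) (hvg : v ∈ g) (h : Conn ℓ E v g g') :
    ∃ es : List (Finset V), ∃ hne : es ≠ [],
      (∀ x ∈ es, x ∈ linkEdges E v) ∧
      es.Chain' (fun a b => ℓ - 1 - 1 ≤ (a ∩ b).card) ∧
      es.head hne = g.erase v ∧ es.getLast hne = g'.erase v := by
  induction h with
  | refl =>
      refine ⟨[g.erase v], by simp, ?_, List.isChain_singleton _, rfl, rfl⟩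
      intro x hx
      simp only [List.mem_singleton] at hx
      subst hx
      simp only [linkEdges, mem_image, mem_filter]
      exact ⟨g, ⟨hg, hvg⟩, rfl⟩
  | @tail b c hab hbc ih =>
      obtain ⟨es, hne, hmem, hchain, hhead, hlast⟩ := ih
      obtain ⟨hb, hc, hvb, hvc, hcard⟩ := hbc
      refine ⟨es ++ [c.erase v], by simp, ?_, ?_, ?_, ?_⟩
      · intro x hx
        rcases List.mem_append.mp hx with hx | hx
        · exact hmem x hx
        · simp only [List.mem_singleton] at hx
          subst hx
          simp only [linkEdges, mem_image, mem_filter]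
          exact ⟨c, ⟨hc, hvc⟩, rfl⟩
      · refine List.isChain_append.mpr ?_
        refine ⟨hchain, List.isChain_singleton _, ?_⟩
        intro x hx y hy
        rw [List.getLast?_eq_getLast (l := es) hne] at hx
        simp only [Option.mem_def, Option.some.injEq] at hx
        simp only [List.head?_cons, Option.mem_def, Option.some.injEq] at hy
        subst hx; subst hy
        rw [hlast]
        omega
      · cases es with
        | nil => exact absurd rfl hne
        | cons hd tl => simpa using hhead
      · rw [List.getLast_append]
        simp
  
lemma core {ℓ : ℕ} {E : Finset (Finset V)} {v : V} (hℓ : 3 ≤ ℓ)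
    (hunif : ∀ e ∈ E, e.card = ℓ) (hdisp : Disperse ℓ E)
    (hconn : ∀ A B : Finset V, A.card = ℓ - 1 → B.card = ℓ - 1 → TightConn ℓ E A B) :
    ∀ g g', g ∈ E → v ∈ g → g' ∈ E → v ∈ g' → Conn ℓ E v g g' := by
  classical
  by_contra hmain
  push_neg at hmain
  obtain ⟨g₀, g₀', hg₀, hvg₀, hg₀', hvg₀', hnc₀⟩ := hmain
  -- property on walk lengths
  set P : ℕ → Prop := fun n => ∃ (g g' e₁ : Finset V) (rest : List (Finset V)),
    g ∈ E ∧ v ∈ g ∧ g' ∈ E ∧ v ∈ g' ∧ ¬ Conn ℓ E v g g' ∧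
    (∀ e ∈ (e₁ :: rest), e ∈ E) ∧
    (e₁ :: rest).Chain' (fun a b => ℓ - 1 ≤ (a ∩ b).card) ∧
    ℓ - 1 ≤ (g ∩ e₁).card ∧
    ℓ - 1 ≤ (g' ∩ ((e₁ :: rest).getLast (List.cons_ne_nil _ _))).card ∧
    (e₁ :: rest).length = n with hPdef
  have hPex : ∃ n, P n := by
    have hc1 : (g₀.erase v).card = ℓ - 1 := by
      rw [card_erase_of_mem hvg₀, hunif g₀ hg₀]
    have hc2 : (g₀'.erase v).card = ℓ - 1 := by
      rw [card_erase_of_mem hvg₀', hunif g₀' hg₀']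
    obtain ⟨es, hne, hmem, hchain, hA, hB⟩ := hconn (g₀.erase v) (g₀'.erase v) hc1 hc2
    obtain ⟨e₁, rest, rfl⟩ := List.exists_cons_of_ne_nil hne
    refine ⟨(e₁ :: rest).length, g₀, g₀', e₁, rest, hg₀, hvg₀, hg₀', hvg₀', hnc₀,
      hmem, hchain, ?_, ?_, rfl⟩
    · have hsub : g₀.erase v ⊆ g₀ ∩ e₁ := by
        intro x hx
        exact mem_inter.mpr ⟨mem_of_mem_erase hx, hA hx⟩
      calc ℓ - 1 = (g₀.erase v).card := hc1.symm
      _ ≤ _ := card_le_card hsub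
    · have hsub : g₀'.erase v ⊆ g₀' ∩ ((e₁ :: rest).getLast (List.cons_ne_nil _ _)) := by
        intro x hx
        exact mem_inter.mpr ⟨mem_of_mem_erase hx, hB hx⟩
      calc ℓ - 1 = (g₀'.erase v).card := hc2.symm
      _ ≤ _ := card_le_card hsub
  set m := Nat.find hPex with hm
  have hmin : ∀ k, k < m → ¬ P k := fun k hk => Nat.find_min hPex hk
  obtain ⟨g, g', e₁, rest, hgE, hvg, hg'E, hvg', hnc, hmem, hchain, hanc1, hanc2, hlen⟩ :=
    Nat.find_spec hPex
  cases rest with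
  | nil =>
      simp only [List.getLast_singleton] at hanc2
      exact hnc (anchored_conn hℓ hunif (hmem e₁ (by simp)) hgE hg'E hvg hvg' hanc1 hanc2)
  | cons e₂ rest2 =>
    have hE1 : e₁ ∈ E := hmem e₁ (by simp)
    have hE2 : e₂ ∈ E := hmem e₂ (by simp)
    have hch12 : ℓ - 1 ≤ (e₁ ∩ e₂).card := (List.isChain_cons_cons.mp hchain).1
    have hchtail : (e₂ :: rest2).Chain' (fun a b => ℓ - 1 ≤ (a ∩ b).card) :=
      (List.isChain_cons_cons.mp hchain).2
    have hlen' : rest2.length + 2 = m := by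
      simp only [List.length_cons] at hlen; omega
    have hlen2 : (e₂ :: rest2).length = m - 1 := by
      simp only [List.length_cons]; omega
    have hgl : (e₁ :: e₂ :: rest2).getLast (List.cons_ne_nil _ _)
        = (e₂ :: rest2).getLast (List.cons_ne_nil _ _) := List.getLast_cons_cons
    rw [hgl] at hanc2
    have hC : ∀ h₂ : Finset V, h₂ ∈ E → v ∈ h₂ → ℓ - 1 ≤ (h₂ ∩ e₂).card →
        Conn ℓ E v g h₂ → False := by
      intro h₂ hh₂ hvh₂ hanc hcgh
      have hcon2 : Conn ℓ E v h₂ g' := by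
        by_contra hk
        exact hmin (m - 1) (by omega) ⟨h₂, g', e₂, rest2, hh₂, hvh₂, hg'E, hvg', hk,
          fun e he => hmem e (List.mem_cons_of_mem _ he), hchtail, hanc, hanc2, hlen2⟩
      exact hnc (hcgh.trans hcon2)
    have hve2 : v ∉ e₂ := by
      intro hv
      refine hC e₂ hE2 hv ?_
        (anchored_conn hℓ hunif hE1 hgE hE2 hvg hv hanc1 (by rwa [inter_comm]))
      rw [inter_self, hunif e₂ hE2]; omega
    have hve1 : v ∉ e₁ := by
      intro hv
      refine hC e₁ hE1 hv hch12 (anchored_conn hℓ hunif hE1 hgE hE1 hvg hv hanc1 ?_)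
      rw [inter_self, hunif e₁ hE1]; omega
    have hne12 : e₁ ≠ e₂ := by
      rintro rfl
      exact hC g hgE hvg hanc1 Relation.ReflTransGen.refl
    have hintcard : (e₁ ∩ e₂).card = ℓ - 1 := by
      by_contra hq
      have hle : (e₁ ∩ e₂).card ≤ ℓ := by
        calc (e₁ ∩ e₂).card ≤ e₁.card := card_le_card inter_subset_left
        _ = ℓ := hunif e₁ hE1
      have hcard : (e₁ ∩ e₂).card = ℓ := by omega
      have h1 : e₁ ∩ e₂ = e₁ :=
        eq_of_subset_of_card_le inter_subset_left (by rw [hcard, hunif e₁ hE1])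
      have h2 : e₁ ⊆ e₂ := h1 ▸ inter_subset_right
      exact hne12 (eq_of_subset_of_card_le h2 (by rw [hunif e₁ hE1, hunif e₂ hE2]))
    have hIsubset1 : e₁ ∩ e₂ ⊆ e₁ := inter_subset_left
    have hIsubset2 : e₁ ∩ e₂ ⊆ e₂ := inter_subset_right
    have hsd1 : (e₁ \ e₂).card = 1 := by
      have := card_sdiff_add_card_inter e₁ e₂
      rw [hintcard, hunif e₁ hE1] at this; omega
    have hsd2 : (e₂ \ e₁).card = 1 := by
      have := card_sdiff_add_card_inter e₂ e₁
      rw [inter_comm e₂ e₁, hintcard, hunif e₂ hE2] at this; omega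
    obtain ⟨a, ha⟩ := card_eq_one.mp hsd1
    obtain ⟨b, hb⟩ := card_eq_one.mp hsd2
    have haa : a ∈ e₁ \ e₂ := ha ▸ mem_singleton_self a
    have hbb : b ∈ e₂ \ e₁ := hb ▸ mem_singleton_self b
    have hae1 : a ∈ e₁ := (mem_sdiff.mp haa).1
    have hae2 : a ∉ e₂ := (mem_sdiff.mp haa).2
    have hbe2 : b ∈ e₂ := (mem_sdiff.mp hbb).1
    have hbe1 : b ∉ e₁ := (mem_sdiff.mp hbb).2
    have hva : v ≠ a := by rintro rfl; exact hve1 hae1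
    have hvb : v ≠ b := by rintro rfl; exact hve2 hbe2
    have haI : a ∉ e₁ ∩ e₂ := fun h => hae2 (mem_inter.mp h).2
    have hbI : b ∉ e₁ ∩ e₂ := fun h => hbe1 (mem_inter.mp h).1
    have hd1 : ∀ x ∈ e₁, x ≠ a → x ∈ e₁ ∩ e₂ := by
      intro x hx hxa
      by_contra hxI
      have hxs : x ∈ e₁ \ e₂ :=
        mem_sdiff.mpr ⟨hx, fun h2 => hxI (mem_inter.mpr ⟨hx, h2⟩)⟩
      rw [ha, mem_singleton] at hxs; exact hxa hxs
    have hd2 : ∀ x ∈ e₂, x ≠ b → x ∈ e₁ ∩ e₂ := by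
      intro x hx hxb
      by_contra hxI
      have hxs : x ∈ e₂ \ e₁ :=
        mem_sdiff.mpr ⟨hx, fun h2 => hxI (mem_inter.mpr ⟨h2, hx⟩)⟩
      rw [hb, mem_singleton] at hxs; exact hxb hxs
    have hH : insert v (e₁ ∩ e₂) ∉ E := by
      intro hmem'
      have hvI : v ∈ insert v (e₁ ∩ e₂) := mem_insert_self _ _
      have hanc' : ℓ - 1 ≤ ((insert v (e₁ ∩ e₂)) ∩ e₂).card := by
        have hsub : e₁ ∩ e₂ ⊆ (insert v (e₁ ∩ e₂)) ∩ e₂ := fun x hx =>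
          mem_inter.mpr ⟨mem_insert_of_mem hx, hIsubset2 hx⟩
        calc ℓ - 1 = (e₁ ∩ e₂).card := hintcard.symm
        _ ≤ _ := card_le_card hsub
      have hanc1' : ℓ - 1 ≤ ((insert v (e₁ ∩ e₂)) ∩ e₁).card := by
        have hsub : e₁ ∩ e₂ ⊆ (insert v (e₁ ∩ e₂)) ∩ e₁ := fun x hx =>
          mem_inter.mpr ⟨mem_insert_of_mem hx, hIsubset1 hx⟩
        calc ℓ - 1 = (e₁ ∩ e₂).card := hintcard.symm
        _ ≤ _ := card_le_card hsub
      exact hC _ hmem' hvI hanc'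
        (anchored_conn hℓ hunif hE1 hgE hmem' hvg hvI hanc1 hanc1')
    have hYcard : (insert v e₁).card = ℓ + 1 := by
      rw [card_insert_of_notMem hve1, hunif e₁ hE1]
    have hgY : g ⊆ insert v e₁ := by
      have ht := typeI hunif hgE hvg hve1 hanc1
      intro x hx
      by_cases hxv : x = v
      · exact hxv ▸ mem_insert_self _ _
      · have hx' : x ∈ g.erase v := mem_erase.mpr ⟨hxv, hx⟩
        rw [← ht] at hx'
        exact mem_insert_of_mem (mem_inter.mp hx').2
    have hgne1 : g ≠ e₁ := by rintro rfl; exact hve1 hvg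
    have hYa : (insert v e₁).erase a ∉ E := by
      have heq : (insert v e₁).erase a = insert v (e₁.erase a) :=
        erase_insert_of_ne hva
      have heq2 : e₁.erase a = e₁ ∩ e₂ := by
        ext x
        rw [mem_erase]
        constructor
        · intro hx; exact hd1 x hx.2 hx.1
        · intro hx; exact ⟨by rintro rfl; exact haI hx, hIsubset1 hx⟩
      rw [heq, heq2]; exact hH
    have hI' : ∀ t ∈ e₁ ∩ e₂, (insert v e₁).erase t ∈ E := by
      intro t htI
      exact disperse_pair hℓ hunif hdisp hYcard hE1 hgE (Ne.symm hgne1)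
        (subset_insert _ _) hgY (mem_insert_of_mem hae1)
        (mem_insert_of_mem (hIsubset1 htI)) (by rintro rfl; exact haI htI) hYa
    have hvgt : ∀ t ∈ e₁ ∩ e₂, v ∈ (insert v e₁).erase t := by
      intro t htI
      exact mem_erase.mpr ⟨by rintro rfl; exact hve1 (hIsubset1 htI), mem_insert_self _ _⟩
    have hanc_gt : ∀ t ∈ e₁ ∩ e₂, ℓ - 1 ≤ (((insert v e₁).erase t) ∩ e₁).card := by
      intro t htI
      have hsub : e₁.erase t ⊆ ((insert v e₁).erase t) ∩ e₁ := by
        intro x hx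
        rw [mem_erase] at hx
        exact mem_inter.mpr ⟨mem_erase.mpr ⟨hx.1, mem_insert_of_mem hx.2⟩, hx.2⟩
      calc ℓ - 1 = (e₁.erase t).card := by
            rw [card_erase_of_mem (hIsubset1 htI), hunif e₁ hE1]
      _ ≤ _ := card_le_card hsub
    have hconn_g_gt : ∀ t ∈ e₁ ∩ e₂, Conn ℓ E v g ((insert v e₁).erase t) := by
      intro t htI
      exact anchored_conn hℓ hunif hE1 hgE (hI' t htI) hvg (hvgt t htI) hanc1
        (hanc_gt t htI)
    have hXcard : (e₁ ∪ e₂).card = ℓ + 1 := by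
      have := card_inter_add_card_union e₁ e₂
      rw [hintcard, hunif e₁ hE1, hunif e₂ hE2] at this; omega
    have hvX : v ∉ e₁ ∪ e₂ := by
      rw [mem_union]; rintro (h | h)
      · exact hve1 h
      · exact hve2 h
    have he1X : e₁ ⊆ e₁ ∪ e₂ := subset_union_left
    have he2X : e₂ ⊆ e₁ ∪ e₂ := subset_union_right
    have hJ : ∀ s ∈ e₁ ∩ e₂, (e₁ ∪ e₂).erase s ∈ E := by
      intro s hsI
      by_contra hfs
      have hIs : ((e₁ ∩ e₂).erase s).Nonempty := by
        rw [← card_pos, card_erase_of_mem hsI, hintcard]; omega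
      obtain ⟨t, ht⟩ := hIs
      have htI : t ∈ e₁ ∩ e₂ := mem_of_mem_erase ht
      have hts : t ≠ s := (mem_erase.mp ht).1
      have hft : (e₁ ∪ e₂).erase t ∈ E :=
        disperse_pair hℓ hunif hdisp hXcard hE1 hE2 hne12 he1X he2X
          (he1X (hIsubset1 hsI)) (he1X (hIsubset1 htI)) (Ne.symm hts) hfs
      have hZcard : (insert v ((e₁ ∪ e₂).erase t)).card = ℓ + 1 := by
        rw [card_insert_of_notMem (fun h => hvX (mem_of_mem_erase h)),
          card_erase_of_mem (he1X (hIsubset1 htI)), hXcard]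
        omega
      have hgtZ : (insert v e₁).erase t ⊆ insert v ((e₁ ∪ e₂).erase t) := by
        intro x hx
        rw [mem_erase, mem_insert] at hx
        rcases hx.2 with rfl | hxe
        · exact mem_insert_self _ _
        · exact mem_insert_of_mem (mem_erase.mpr ⟨hx.1, he1X hxe⟩)
      have hgtne : (e₁ ∪ e₂).erase t ≠ (insert v e₁).erase t := by
        intro h
        have hv1 : v ∈ (insert v e₁).erase t := hvgt t htI
        rw [← h] at hv1
        exact hvX (mem_of_mem_erase hv1)
      have hZa : (insert v ((e₁ ∪ e₂).erase t)).erase a ∉ E := by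
        intro hmem'
        have hvZa : v ∈ (insert v ((e₁ ∪ e₂).erase t)).erase a :=
          mem_erase.mpr ⟨hva, mem_insert_self _ _⟩
        have hanc' : ℓ - 1 ≤ (((insert v ((e₁ ∪ e₂).erase t)).erase a) ∩ e₂).card := by
          have hsub : e₂.erase t ⊆ ((insert v ((e₁ ∪ e₂).erase t)).erase a) ∩ e₂ := by
            intro x hx
            rw [mem_erase] at hx
            refine mem_inter.mpr ⟨mem_erase.mpr ⟨by rintro rfl; exact hae2 hx.2, ?_⟩, hx.2⟩
            exact mem_insert_of_mem (mem_erase.mpr ⟨hx.1, he2X hx.2⟩)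
          calc ℓ - 1 = (e₂.erase t).card := by
                rw [card_erase_of_mem (hIsubset2 htI), hunif e₂ hE2]
          _ ≤ _ := card_le_card hsub
        refine hC _ hmem' hvZa hanc' ?_
        refine (hconn_g_gt t htI).tail ⟨hI' t htI, hmem', hvgt t htI, hvZa, ?_⟩
        have hsub : (e₁ ∩ e₂).erase t ⊆
            (((insert v e₁).erase t).erase v) ∩
              (((insert v ((e₁ ∪ e₂).erase t)).erase a).erase v) := by
          intro x hx
          rw [mem_erase] at hx
          have hxv : x ≠ v := by rintro rfl; exact hve1 (hIsubset1 hx.2)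
          refine mem_inter.mpr ⟨mem_erase.mpr ⟨hxv,
            mem_erase.mpr ⟨hx.1, mem_insert_of_mem (hIsubset1 hx.2)⟩⟩, ?_⟩
          refine mem_erase.mpr ⟨hxv, mem_erase.mpr ⟨by rintro rfl; exact haI hx.2, ?_⟩⟩
          exact mem_insert_of_mem (mem_erase.mpr ⟨hx.1, he1X (hIsubset1 hx.2)⟩)
        calc ℓ - 2 = ((e₁ ∩ e₂).erase t).card := by
              rw [card_erase_of_mem htI, hintcard]; omega
        _ ≤ _ := card_le_card hsub
      have hsZ : s ∈ insert v ((e₁ ∪ e₂).erase t) :=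
        mem_insert_of_mem (mem_erase.mpr ⟨Ne.symm hts, he1X (hIsubset1 hsI)⟩)
      have haZ : a ∈ insert v ((e₁ ∪ e₂).erase t) :=
        mem_insert_of_mem (mem_erase.mpr ⟨by rintro rfl; exact haI htI, he1X hae1⟩)
      have hR : (insert v ((e₁ ∪ e₂).erase t)).erase s ∈ E :=
        disperse_pair hℓ hunif hdisp hZcard hft (hI' t htI) hgtne
          (subset_insert _ _) hgtZ haZ hsZ (by rintro rfl; exact haI hsI) hZa
      have hWcard : (insert v ((e₁ ∪ e₂).erase s)).card = ℓ + 1 := by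
        rw [card_insert_of_notMem (fun h => hvX (mem_of_mem_erase h)),
          card_erase_of_mem (he1X (hIsubset1 hsI)), hXcard]
        omega
      have hgsW : (insert v e₁).erase s ⊆ insert v ((e₁ ∪ e₂).erase s) := by
        intro x hx
        rw [mem_erase, mem_insert] at hx
        rcases hx.2 with rfl | hxe
        · exact mem_insert_self _ _
        · exact mem_insert_of_mem (mem_erase.mpr ⟨hx.1, he1X hxe⟩)
      have hRW : (insert v ((e₁ ∪ e₂).erase t)).erase s ⊆ insert v ((e₁ ∪ e₂).erase s) := by
        intro x hx
        rw [mem_erase] at hx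
        rcases mem_insert.mp hx.2 with rfl | hxe
        · exact mem_insert_self _ _
        · exact mem_insert_of_mem (mem_erase.mpr ⟨hx.1, mem_of_mem_erase hxe⟩)
      have hbR : b ∈ (insert v ((e₁ ∪ e₂).erase t)).erase s := by
        refine mem_erase.mpr ⟨by rintro rfl; exact hbI hsI, ?_⟩
        exact mem_insert_of_mem (mem_erase.mpr ⟨by rintro rfl; exact hbI htI, he2X hbe2⟩)
      have hgsne : (insert v e₁).erase s ≠ (insert v ((e₁ ∪ e₂).erase t)).erase s := by
        intro h
        have hbg : b ∈ (insert v e₁).erase s := h ▸ hbR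
        rw [mem_erase, mem_insert] at hbg
        rcases hbg.2 with h' | h'
        · exact hvb h'.symm
        · exact hbe1 h'
      have hWv : (insert v ((e₁ ∪ e₂).erase s)).erase v ∉ E := by
        have heq : (insert v ((e₁ ∪ e₂).erase s)).erase v = (e₁ ∪ e₂).erase s :=
          erase_insert (fun h => hvX (mem_of_mem_erase h))
        rw [heq]; exact hfs
      have hWa : (insert v ((e₁ ∪ e₂).erase s)).erase a ∉ E := by
        intro hmem'
        have hvWa : v ∈ (insert v ((e₁ ∪ e₂).erase s)).erase a :=
          mem_erase.mpr ⟨hva, mem_insert_self _ _⟩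
        have hanc' : ℓ - 1 ≤ (((insert v ((e₁ ∪ e₂).erase s)).erase a) ∩ e₂).card := by
          have hsub : e₂.erase s ⊆ ((insert v ((e₁ ∪ e₂).erase s)).erase a) ∩ e₂ := by
            intro x hx
            rw [mem_erase] at hx
            refine mem_inter.mpr ⟨mem_erase.mpr ⟨by rintro rfl; exact hae2 hx.2, ?_⟩, hx.2⟩
            exact mem_insert_of_mem (mem_erase.mpr ⟨hx.1, he2X hx.2⟩)
          calc ℓ - 1 = (e₂.erase s).card := by
                rw [card_erase_of_mem (hIsubset2 hsI), hunif e₂ hE2]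
          _ ≤ _ := card_le_card hsub
        refine hC _ hmem' hvWa hanc' ?_
        refine (hconn_g_gt s hsI).tail ⟨hI' s hsI, hmem', hvgt s hsI, hvWa, ?_⟩
        have hsub : (e₁ ∩ e₂).erase s ⊆
            (((insert v e₁).erase s).erase v) ∩
              (((insert v ((e₁ ∪ e₂).erase s)).erase a).erase v) := by
          intro x hx
          rw [mem_erase] at hx
          have hxv : x ≠ v := by rintro rfl; exact hve1 (hIsubset1 hx.2)
          refine mem_inter.mpr ⟨mem_erase.mpr ⟨hxv,
            mem_erase.mpr ⟨hx.1, mem_insert_of_mem (hIsubset1 hx.2)⟩⟩, ?_⟩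
          refine mem_erase.mpr ⟨hxv, mem_erase.mpr ⟨by rintro rfl; exact haI hx.2, ?_⟩⟩
          exact mem_insert_of_mem (mem_erase.mpr ⟨hx.1, he1X (hIsubset1 hx.2)⟩)
        calc ℓ - 2 = ((e₁ ∩ e₂).erase s).card := by
              rw [card_erase_of_mem hsI, hintcard]; omega
        _ ≤ _ := card_le_card hsub
      exact two_missing hℓ hunif hdisp hWcard (hI' s hsI) hR hgsne hgsW hRW
        (mem_insert_self _ _)
        (mem_insert_of_mem (mem_erase.mpr ⟨by rintro rfl; exact haI hsI, he1X hae1⟩))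
        hva hWv hWa
    cases rest2 with
    | nil =>
        simp only [List.getLast_singleton] at hanc2
        have hg'U : g' ⊆ insert v e₂ := by
          have ht := typeI hunif hg'E hvg' hve2 hanc2
          intro x hx
          by_cases hxv : x = v
          · exact hxv ▸ mem_insert_self _ _
          · have hx' : x ∈ g'.erase v := mem_erase.mpr ⟨hxv, hx⟩
            rw [← ht] at hx'
            exact mem_insert_of_mem (mem_inter.mp hx').2
        have hUcard : (insert v e₂).card = ℓ + 1 := by
          rw [card_insert_of_notMem hve2, hunif e₂ hE2]
        have hg'ne2 : g' ≠ e₂ := by rintro rfl; exact hve2 hvg'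
        have hUb : (insert v e₂).erase b ∉ E := by
          have heq : (insert v e₂).erase b = insert v (e₂.erase b) :=
            erase_insert_of_ne hvb
          have heq2 : e₂.erase b = e₁ ∩ e₂ := by
            ext x
            rw [mem_erase]
            constructor
            · intro hx; exact hd2 x hx.2 hx.1
            · intro hx; exact ⟨by rintro rfl; exact hbI hx, hIsubset2 hx⟩
          rw [heq, heq2]; exact hH
        obtain ⟨t, htI⟩ : (e₁ ∩ e₂).Nonempty := by
          rw [← card_pos, hintcard]; omega
        have hqt : (insert v e₂).erase t ∈ E :=
          disperse_pair hℓ hunif hdisp hUcard hE2 hg'E (Ne.symm hg'ne2)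
            (subset_insert _ _) hg'U (mem_insert_of_mem hbe2)
            (mem_insert_of_mem (hIsubset2 htI)) (by rintro rfl; exact hbI htI) hUb
        have hvqt : v ∈ (insert v e₂).erase t :=
          mem_erase.mpr ⟨by rintro rfl; exact hve1 (hIsubset1 htI), mem_insert_self _ _⟩
        have hcq : Conn ℓ E v g ((insert v e₂).erase t) := by
          refine (hconn_g_gt t htI).tail ⟨hI' t htI, hqt, hvgt t htI, hvqt, ?_⟩
          have hsub : (e₁ ∩ e₂).erase t ⊆
              (((insert v e₁).erase t).erase v) ∩ (((insert v e₂).erase t).erase v) := by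
            intro x hx
            rw [mem_erase] at hx
            have hxv : x ≠ v := by rintro rfl; exact hve1 (hIsubset1 hx.2)
            refine mem_inter.mpr ⟨?_, ?_⟩
            · exact mem_erase.mpr ⟨hxv,
                mem_erase.mpr ⟨hx.1, mem_insert_of_mem (hIsubset1 hx.2)⟩⟩
            · exact mem_erase.mpr ⟨hxv,
                mem_erase.mpr ⟨hx.1, mem_insert_of_mem (hIsubset2 hx.2)⟩⟩
          calc ℓ - 2 = ((e₁ ∩ e₂).erase t).card := by
                rw [card_erase_of_mem htI, hintcard]; omega
          _ ≤ _ := card_le_card hsub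
        have hancq : ℓ - 1 ≤ (((insert v e₂).erase t) ∩ e₂).card := by
          have hsub : e₂.erase t ⊆ ((insert v e₂).erase t) ∩ e₂ := by
            intro x hx
            rw [mem_erase] at hx
            exact mem_inter.mpr ⟨mem_erase.mpr ⟨hx.1, mem_insert_of_mem hx.2⟩, hx.2⟩
          calc ℓ - 1 = (e₂.erase t).card := by
                rw [card_erase_of_mem (hIsubset2 htI), hunif e₂ hE2]
          _ ≤ _ := card_le_card hsub
        exact hC _ hqt hvqt hancq hcq
    | cons e₃ rest3 =>
        have hch23 : ℓ - 1 ≤ (e₂ ∩ e₃).card := (List.isChain_cons_cons.mp hchtail).1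
        have hchtail2 : (e₃ :: rest3).Chain' (fun a b => ℓ - 1 ≤ (a ∩ b).card) :=
          (List.isChain_cons_cons.mp hchtail).2
        have hgl2 : (e₂ :: e₃ :: rest3).getLast (List.cons_ne_nil _ _)
            = (e₃ :: rest3).getLast (List.cons_ne_nil _ _) := List.getLast_cons_cons
        rw [hgl2] at hanc2
        have hlen3 : (e₃ :: rest3).length = m - 1 - 1 := by
          simp only [List.length_cons] at hlen' ⊢; omega
        by_cases hsub3 : e₁ ∩ e₂ ⊆ e₃
        · refine hmin (m - 1) (by omega)
            ⟨g, g', e₁, e₃ :: rest3, hgE, hvg, hg'E, hvg', hnc, ?_, ?_, hanc1, hanc2, ?_⟩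
          · intro e he
            rcases List.mem_cons.mp he with rfl | he
            · exact hE1
            · exact hmem e (List.mem_cons_of_mem _ (List.mem_cons_of_mem _ he))
          · refine List.isChain_cons_cons.mpr ⟨?_, hchtail2⟩
            have hsub : e₁ ∩ e₂ ⊆ e₁ ∩ e₃ := fun x hx =>
              mem_inter.mpr ⟨(mem_inter.mp hx).1, hsub3 hx⟩
            calc ℓ - 1 = (e₁ ∩ e₂).card := hintcard.symm
            _ ≤ _ := card_le_card hsub
          · simp only [List.length_cons] at hlen' ⊢
            omega
        · obtain ⟨s, hsI, hse3⟩ := not_subset.mp hsub3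
          have hfsE : (e₁ ∪ e₂).erase s ∈ E := hJ s hsI
          have hgsE : (insert v e₁).erase s ∈ E := hI' s hsI
          have hvgs : v ∈ (insert v e₁).erase s := hvgt s hsI
          have hancgfs : ℓ - 1 ≤ (((insert v e₁).erase s) ∩ ((e₁ ∪ e₂).erase s)).card := by
            have hsub : e₁.erase s ⊆ ((insert v e₁).erase s) ∩ ((e₁ ∪ e₂).erase s) := by
              intro x hx
              rw [mem_erase] at hx
              exact mem_inter.mpr ⟨mem_erase.mpr ⟨hx.1, mem_insert_of_mem hx.2⟩,
                mem_erase.mpr ⟨hx.1, he1X hx.2⟩⟩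
            calc ℓ - 1 = (e₁.erase s).card := by
                  rw [card_erase_of_mem (hIsubset1 hsI), hunif e₁ hE1]
            _ ≤ _ := card_le_card hsub
          have hrel : ℓ - 1 ≤ (((e₁ ∪ e₂).erase s) ∩ e₃).card := by
            have hsub : e₂ ∩ e₃ ⊆ ((e₁ ∪ e₂).erase s) ∩ e₃ := by
              intro x hx
              rw [mem_inter] at hx
              exact mem_inter.mpr ⟨mem_erase.mpr
                ⟨by rintro rfl; exact hse3 hx.2, he2X hx.1⟩, hx.2⟩
            calc ℓ - 1 ≤ (e₂ ∩ e₃).card := hch23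
            _ ≤ _ := card_le_card hsub
          have hconn_ggs : Conn ℓ E v g ((insert v e₁).erase s) := hconn_g_gt s hsI
          by_cases hcs : Conn ℓ E v ((insert v e₁).erase s) g'
          · exact hnc (hconn_ggs.trans hcs)
          · refine hmin (m - 1) (by omega)
              ⟨(insert v e₁).erase s, g', (e₁ ∪ e₂).erase s, e₃ :: rest3, hgsE, hvgs,
                hg'E, hvg', hcs, ?_, List.isChain_cons_cons.mpr ⟨hrel, hchtail2⟩, hancgfs, hanc2, ?_⟩
            · intro e he
              rcases List.mem_cons.mp he with rfl | he
              · exact hfsE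
              · exact hmem e (List.mem_cons_of_mem _ (List.mem_cons_of_mem _ he))
            · simp only [List.length_cons] at hlen' ⊢
              omega


end LinksAux

theorem links_are_tightly_connected {V : Type*} [DecidableEq V] [Fintype V]
    (ℓ : ℕ) (hℓ : 3 ≤ ℓ)
    (E : Finset (Finset V)) (hunif : ∀ e ∈ E, e.card = ℓ) (hdisp : Disperse ℓ E)
    (hconn : ∀ A B : Finset V, A.card = ℓ - 1 → B.card = ℓ - 1 → TightConn ℓ E A B)
    (v : V) :
    ∀ A B : Finset V, v ∉ A → v ∉ B → A.card = ℓ - 2 → B.card = ℓ - 2 →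
      TightConn (ℓ - 1) (linkEdges E v) A B := by
  intro A B hvA hvB hA hB
  have hA' : (insert v A).card = ℓ - 1 := by
    rw [card_insert_of_notMem hvA, hA]; omega
  have hB' : (insert v B).card = ℓ - 1 := by
    rw [card_insert_of_notMem hvB, hB]; omega
  obtain ⟨es, hne, hmem, hchain, hAh, hBh⟩ := hconn (insert v A) (insert v B) hA' hB'
  have hE1 : es.head hne ∈ E := hmem _ (List.head_mem hne)
  have hEm : es.getLast hne ∈ E := hmem _ (List.getLast_mem hne)
  have hv1 : v ∈ es.head hne := hAh (mem_insert_self _ _)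
  have hvm : v ∈ es.getLast hne := hBh (mem_insert_self _ _)
  have hcore := LinksAux.core hℓ hunif hdisp hconn (es.head hne) (es.getLast hne)
    hE1 hv1 hEm hvm
  obtain ⟨ws, hwne, hwmem, hwchain, hwhead, hwlast⟩ :=
    LinksAux.conn_to_walk hE1 hv1 hcore
  refine ⟨ws, hwne, hwmem, hwchain, ?_, ?_⟩
  · rw [hwhead]
    intro x hx
    exact mem_erase.mpr ⟨by rintro rfl; exact hvA hx, hAh (mem_insert_of_mem hx)⟩
  · rw [hwlast]
    intro x hx
    exact mem_erase.mpr ⟨by rintro rfl; exact hvB hx, hBh (mem_insert_of_mem hx)⟩
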